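/- arXiv:1810.03592 — 7 statements merged into one kernel-verified Lean document; each statement's English description precedes it below -/
import Mathlib

section
/- For every subset I ⊆ {1,…,m}, z^OPT ≤ z^σ(I). -/
/-- `σ(x, y) = (x - y)²` if `x > 2y`, and `σ(x, y) = y²` if `x ≤ 2y`. -/
noncomputable def sigmaFn (x y : ℝ) : ℝ := if x > 2 * y then (x - y) ^ 2 else y ^ 2

lemma max_sq_le_sq (t y : ℝ) (hy : 0 < y) : (max 0 t - y) ^ 2 ≤ (t - y) ^ 2 := by
  rcases le_total t 0 with h | h
  · rw [max_eq_left h]; nlinarith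
  · rw [max_eq_right h]

lemma max_sq_le_sigma (t y : ℝ) (hy : 0 < y) :
    (max 0 t - y) ^ 2 ≤ sigmaFn t y := by
  unfold sigmaFn
  split_ifs with h
  · exact max_sq_le_sq t y hy
  · push_neg at h
    rcases le_total t 0 with h1 | h1
    · rw [max_eq_left h1]; nlinarith
    · rw [max_eq_right h1]; nlinarith

/-- For every subset `I ⊆ {1, …, m}`, `z^OPT ≤ z^σ(I)`. -/
theorem zopt_le_zsigma {p n m : ℕ} (hp : 0 < p) (hn : 0 < n) (hmn : m ≤ n)
    (X : ℕ → Fin p → ℝ) (Y : ℕ → ℝ)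
    (hYpos : ∀ i, 1 ≤ i → i ≤ m → 0 < Y i)
    (hYneg : ∀ i, m < i → i ≤ n → Y i ≤ 0)
    (F : (Fin p → ℝ) × ℝ → ℝ)
    (hF : ∀ b, F b =
      ∑ i ∈ Finset.Icc 1 n, (max 0 (∑ j, X i j * b.1 j + b.2) - Y i) ^ 2)
    (φ : (Fin p → ℝ) × ℝ → ℝ)
    (hφ : ∀ b, φ b =
      ∑ i ∈ Finset.Icc (m + 1) n, (max 0 (∑ j, X i j * b.1 j + b.2) - Y i) ^ 2)
    (fσ : Finset ℕ → (Fin p → ℝ) × ℝ → ℝ)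
    (hfσ : ∀ I b, fσ I b =
      ∑ i ∈ I, ((∑ j, X i j * b.1 j + b.2) - Y i) ^ 2
      + ∑ i ∈ Finset.Icc 1 m \ I, sigmaFn (∑ j, X i j * b.1 j + b.2) (Y i)
      + φ b)
    (I : Finset ℕ) (hI : I ⊆ Finset.Icc 1 m) :
    (⨅ b : (Fin p → ℝ) × ℝ, F b) ≤ ⨅ b : (Fin p → ℝ) × ℝ, fσ I b := by
  have hsplit : Finset.Icc 1 n = Finset.Icc 1 m ∪ Finset.Icc (m + 1) n := by
    ext i
    simp only [Finset.mem_union, Finset.mem_Icc]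
    omega
  have hdisj : Disjoint (Finset.Icc 1 m) (Finset.Icc (m + 1) n) := by
    rw [Finset.disjoint_left]
    intro a ha hb
    simp only [Finset.mem_Icc] at ha hb
    omega
  have key : ∀ b, F b ≤ fσ I b := by
    intro b
    rw [hF b, hfσ I b, hφ b, hsplit, Finset.sum_union hdisj]
    have heq : ∑ i ∈ Finset.Icc 1 m, (max 0 (∑ j, X i j * b.1 j + b.2) - Y i) ^ 2 =
        ∑ i ∈ I, (max 0 (∑ j, X i j * b.1 j + b.2) - Y i) ^ 2
        + ∑ i ∈ Finset.Icc 1 m \ I, (max 0 (∑ j, X i j * b.1 j + b.2) - Y i) ^ 2 := by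
      rw [← Finset.sum_union Finset.disjoint_sdiff, Finset.union_sdiff_of_subset hI]
    rw [heq]
    have h1 : ∑ i ∈ I, (max 0 (∑ j, X i j * b.1 j + b.2) - Y i) ^ 2 ≤
        ∑ i ∈ I, ((∑ j, X i j * b.1 j + b.2) - Y i) ^ 2 := by
      refine Finset.sum_le_sum fun i hi => ?_
      have hm := Finset.mem_Icc.mp (hI hi)
      exact max_sq_le_sq _ _ (hYpos i hm.1 hm.2)
    have h2 : ∑ i ∈ Finset.Icc 1 m \ I, (max 0 (∑ j, X i j * b.1 j + b.2) - Y i) ^ 2 ≤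
        ∑ i ∈ Finset.Icc 1 m \ I, sigmaFn (∑ j, X i j * b.1 j + b.2) (Y i) := by
      refine Finset.sum_le_sum fun i hi => ?_
      have hm := Finset.mem_Icc.mp (Finset.mem_sdiff.mp hi).1
      exact max_sq_le_sigma _ _ (hYpos i hm.1 hm.2)
    linarith
  apply ciInf_mono _ key
  refine ⟨0, ?_⟩
  rintro y ⟨b, rfl⟩
  rw [hF b]
  exact Finset.sum_nonneg fun i _ => sq_nonneg _
end

section
/- Suppose the infimum z^OPT is attained at some (β^OPT, β₀^OPT) ∈ ℝ^p × ℝ, and let I^OPT = { i ∈ {1,…,m} : X_iᵀβ^OPT + β₀^OPT > 0 }. Then z^σ(I^OPT) = z^OPT; in particular there exists a subset I ⊆ {1,…,m} with z^σ(I) = z^OPT. -/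
lemma max_term_le_sq (t Y : ℝ) (hY : 0 < Y) : (max 0 t - Y) ^ 2 ≤ (t - Y) ^ 2 := by
  rcases le_or_gt t 0 with h | h
  · rw [max_eq_left h]; nlinarith
  · rw [max_eq_right h.le]

lemma max_term_le_sigma (t Y : ℝ) (hY : 0 < Y) : (max 0 t - Y) ^ 2 ≤ sigmaFn t Y := by
  unfold sigmaFn
  split_ifs with h
  · exact max_term_le_sq t Y hY
  · rcases le_or_gt t 0 with h' | h'
    · rw [max_eq_left h']; nlinarith
    · rw [max_eq_right h'.le]; nlinarith

/-- If the infimum `z^OPT` is attained at some `(β^OPT, β₀^OPT)`, and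
`I^OPT = {i ∈ {1,…,m} : X iᵀβ^OPT + β₀^OPT > 0}`, then `z^σ(I^OPT) = z^OPT`; in particular
there exists `I ⊆ {1,…,m}` with `z^σ(I) = z^OPT`. -/
theorem zsigma_Iopt_eq_zopt {p n m : ℕ} (hp : 0 < p) (hn : 0 < n) (hmn : m ≤ n)
    (X : ℕ → Fin p → ℝ) (Y : ℕ → ℝ)
    (hYpos : ∀ i, 1 ≤ i → i ≤ m → 0 < Y i)
    (hYneg : ∀ i, m < i → i ≤ n → Y i ≤ 0)
    (F : (Fin p → ℝ) × ℝ → ℝ)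
    (hF : ∀ b, F b =
      ∑ i ∈ Finset.Icc 1 n, (max 0 (∑ j, X i j * b.1 j + b.2) - Y i) ^ 2)
    (φ : (Fin p → ℝ) × ℝ → ℝ)
    (hφ : ∀ b, φ b =
      ∑ i ∈ Finset.Icc (m + 1) n, (max 0 (∑ j, X i j * b.1 j + b.2) - Y i) ^ 2)
    (fσ : Finset ℕ → (Fin p → ℝ) × ℝ → ℝ)
    (hfσ : ∀ I b, fσ I b =
      ∑ i ∈ I, ((∑ j, X i j * b.1 j + b.2) - Y i) ^ 2
      + ∑ i ∈ Finset.Icc 1 m \ I, sigmaFn (∑ j, X i j * b.1 j + b.2) (Y i)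
      + φ b)
    (βopt : Fin p → ℝ) (β₀opt : ℝ)
    (hmin : ∀ b : (Fin p → ℝ) × ℝ, F (βopt, β₀opt) ≤ F b)
    (Iopt : Finset ℕ)
    (hIopt : Iopt = (Finset.Icc 1 m).filter (fun i => 0 < ∑ j, X i j * βopt j + β₀opt)) :
    (⨅ b : (Fin p → ℝ) × ℝ, fσ Iopt b) = (⨅ b : (Fin p → ℝ) × ℝ, F b)
    ∧ ∃ I : Finset ℕ, I ⊆ Finset.Icc 1 m ∧
        (⨅ b : (Fin p → ℝ) × ℝ, fσ I b) = ⨅ b : (Fin p → ℝ) × ℝ, F b := by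
  have hIsub : Iopt ⊆ Finset.Icc 1 m := hIopt ▸ Finset.filter_subset _ _
  -- split of F
  have hFsplit : ∀ b, F b =
      (∑ i ∈ Iopt, (max 0 (∑ j, X i j * b.1 j + b.2) - Y i) ^ 2)
      + (∑ i ∈ Finset.Icc 1 m \ Iopt, (max 0 (∑ j, X i j * b.1 j + b.2) - Y i) ^ 2)
      + φ b := by
    intro b
    rw [hF, hφ]
    have h1 : Finset.Icc 1 n = Finset.Ioc 0 n := Finset.Icc_add_one_left_eq_Ioc 0 n
    have h2 : Finset.Icc (m + 1) n = Finset.Ioc m n := Finset.Icc_add_one_left_eq_Ioc m n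
    have h3 : Finset.Icc 1 m = Finset.Ioc 0 m := Finset.Icc_add_one_left_eq_Ioc 0 m
    rw [h1, h2, h3,
      ← Finset.sum_Ioc_consecutive
        (f := fun i => (max 0 (∑ j, X i j * b.1 j + b.2) - Y i) ^ 2)
        (Nat.zero_le m) hmn,
      ← Finset.sum_sdiff (h3 ▸ hIsub : Iopt ⊆ Finset.Ioc 0 m)]
    ring
  have hmemY : ∀ i ∈ Finset.Icc 1 m, 0 < Y i := by
    intro i hi
    rw [Finset.mem_Icc] at hi
    exact hYpos i hi.1 hi.2
  -- pointwise inequality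
  have key : ∀ b, F b ≤ fσ Iopt b := by
    intro b
    rw [hFsplit, hfσ]
    refine add_le_add (add_le_add (Finset.sum_le_sum ?_) (Finset.sum_le_sum ?_)) le_rfl
    · intro i hi
      exact max_term_le_sq _ _ (hmemY i (hIsub hi))
    · intro i hi
      exact max_term_le_sigma _ _ (hmemY i (Finset.mem_sdiff.mp hi).1)
  -- equality at the optimum
  have keyeq : fσ Iopt (βopt, β₀opt) = F (βopt, β₀opt) := by
    rw [hFsplit, hfσ]
    congr 2
    · refine Finset.sum_congr rfl fun i hi => ?_
      have hpos : 0 < ∑ j, X i j * βopt j + β₀opt := by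
        rw [hIopt] at hi
        exact (Finset.mem_filter.mp hi).2
      rw [max_eq_right hpos.le]
    · refine Finset.sum_congr rfl fun i hi => ?_
      obtain ⟨hi1, hi2⟩ := Finset.mem_sdiff.mp hi
      have hnpos : ¬ (0 < ∑ j, X i j * βopt j + β₀opt) := by
        intro h
        exact hi2 (hIopt ▸ Finset.mem_filter.mpr ⟨hi1, h⟩)
      push_neg at hnpos
      have hY := hmemY i hi1
      rw [sigmaFn, if_neg (by push_neg; linarith), max_eq_left hnpos]
      ring
  have hbddF : BddBelow (Set.range F) := ⟨F (βopt, β₀opt), by rintro x ⟨b, rfl⟩; exact hmin b⟩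
  have hbddσ : BddBelow (Set.range (fσ Iopt)) :=
    ⟨F (βopt, β₀opt), by rintro x ⟨b, rfl⟩; exact (hmin b).trans (key b)⟩
  have hinfF : (⨅ b, F b) = F (βopt, β₀opt) :=
    le_antisymm (ciInf_le hbddF _) (le_ciInf hmin)
  have hmain : (⨅ b : (Fin p → ℝ) × ℝ, fσ Iopt b) = ⨅ b : (Fin p → ℝ) × ℝ, F b := by
    rw [hinfF]
    refine le_antisymm ?_ (le_ciInf fun b => (hmin b).trans (key b))
    calc (⨅ b, fσ Iopt b) ≤ fσ Iopt (βopt, β₀opt) := ciInf_le hbddσ _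
    _ = F (βopt, β₀opt) := keyeq
  exact ⟨hmain, Iopt, hIsub, hmain⟩
end

section
/- Assume additionally that Y_1 ≤ Y_2 ≤ … ≤ Y_m and that the infimum z^OPT is attained at some (β^OPT, β₀^OPT). Then z^OPT ≤ z^approx ≤ (n/k) · z^OPT. -/
/-- The family `𝔽_k` of subsets `I ⊆ {1,…,m}` whose complement in `{1,…,m}` has the form
`{1,…,i₁} ∪ {i₂,…,i_j}` for some `j ∈ {1,…,k}` and `0 ≤ i₁ < i₂ < … < i_j ≤ m`
(the finite set `t` collects the `j - 1` indices `i₂ < … < i_j`). -/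
def approxFamily (m k : ℕ) : Set (Finset ℕ) :=
  {I | I ⊆ Finset.Icc 1 m ∧
    ∃ (j i₁ : ℕ) (t : Finset ℕ),
      1 ≤ j ∧ j ≤ k ∧ i₁ ≤ m ∧ t.card = j - 1 ∧
      (∀ x ∈ t, i₁ < x ∧ x ≤ m) ∧
      Finset.Icc 1 m \ I = Finset.Icc 1 i₁ ∪ t}

private lemma sq_max_le_sq (x y : ℝ) (hy : 0 < y) : (max 0 x - y)^2 ≤ (x - y)^2 := by
  rcases le_or_gt x 0 with h | h
  · rw [max_eq_left h]; nlinarith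
  · rw [max_eq_right h.le]

private lemma sq_max_le_sigma (x y : ℝ) (hy : 0 < y) : (max 0 x - y)^2 ≤ sigmaFn x y := by
  unfold sigmaFn
  split_ifs with h
  · rw [max_eq_right (by nlinarith : (0:ℝ) ≤ x)]
  · push_neg at h
    rcases le_or_gt x 0 with h2 | h2
    · rw [max_eq_left h2]; nlinarith
    · rw [max_eq_right h2.le]; nlinarith

private lemma exists_top_subset (j : ℕ) : ∀ S : Finset ℕ, j ≤ S.card →
    ∃ T, T ⊆ S ∧ T.card = j ∧ ∀ s ∈ S \ T, ∀ t ∈ T, s < t := by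
  induction j with
  | zero => exact fun S _ => ⟨∅, Finset.empty_subset _, rfl, by simp⟩
  | succ j ih =>
    intro S hS
    have hne : S.Nonempty := Finset.card_pos.mp (by omega)
    obtain ⟨T', hsub, hcard, hlt⟩ := ih (S.erase (S.max' hne))
      (by rw [Finset.card_erase_of_mem (S.max'_mem hne)]; omega)
    have hMnot : S.max' hne ∉ T' := fun h => (Finset.mem_erase.mp (hsub h)).1 rfl
    refine ⟨insert (S.max' hne) T', Finset.insert_subset (S.max'_mem hne)
      (hsub.trans (Finset.erase_subset _ _)),
      by rw [Finset.card_insert_of_notMem hMnot, hcard], ?_⟩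
    intro s hs t ht
    rw [Finset.mem_sdiff, Finset.mem_insert] at hs
    push_neg at hs
    rcases Finset.mem_insert.mp ht with rfl | htT
    · exact lt_of_le_of_ne (S.le_max' s hs.1) hs.2.1
    · exact hlt s (Finset.mem_sdiff.mpr ⟨Finset.mem_erase.mpr ⟨hs.2.1, hs.1⟩, hs.2.2⟩) t htT


/-- if `Y₁ ≤ … ≤ Y_m` and the infimum `z^OPT` is attained, then
`z^OPT ≤ z^approx ≤ (n / k) · z^OPT`, where `z^approx = min_{I ∈ 𝔽_k} z^σ(I)`. -/
theorem approx_ratio {p n m k : ℕ} (hp : 0 < p) (hn : 0 < n) (hmn : m ≤ n)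
    (hk1 : 1 ≤ k) (hkn : k ≤ n)
    (X : ℕ → Fin p → ℝ) (Y : ℕ → ℝ)
    (hYpos : ∀ i, 1 ≤ i → i ≤ m → 0 < Y i)
    (hYneg : ∀ i, m < i → i ≤ n → Y i ≤ 0)
    (hYsorted : ∀ i j, 1 ≤ i → i ≤ j → j ≤ m → Y i ≤ Y j)
    (F : (Fin p → ℝ) × ℝ → ℝ)
    (hF : ∀ b, F b =
      ∑ i ∈ Finset.Icc 1 n, (max 0 (∑ j, X i j * b.1 j + b.2) - Y i) ^ 2)
    (φ : (Fin p → ℝ) × ℝ → ℝ)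
    (hφ : ∀ b, φ b =
      ∑ i ∈ Finset.Icc (m + 1) n, (max 0 (∑ j, X i j * b.1 j + b.2) - Y i) ^ 2)
    (fσ : Finset ℕ → (Fin p → ℝ) × ℝ → ℝ)
    (hfσ : ∀ I b, fσ I b =
      ∑ i ∈ I, ((∑ j, X i j * b.1 j + b.2) - Y i) ^ 2
      + ∑ i ∈ Finset.Icc 1 m \ I, sigmaFn (∑ j, X i j * b.1 j + b.2) (Y i)
      + φ b)
    (βopt : Fin p → ℝ) (β₀opt : ℝ)
    (hmin : ∀ b : (Fin p → ℝ) × ℝ, F (βopt, β₀opt) ≤ F b)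
    (zopt zapprox : ℝ)
    (hzopt : zopt = ⨅ b : (Fin p → ℝ) × ℝ, F b)
    (hzapprox : zapprox =
      ⨅ I : approxFamily m k, ⨅ b : (Fin p → ℝ) × ℝ, fσ (I : Finset ℕ) b) :
    zopt ≤ zapprox ∧ zapprox ≤ ((n : ℝ) / (k : ℝ)) * zopt := by
  classical
  set c : ℕ → ℝ := fun i => ∑ j, X i j * βopt j + β₀opt with hc
  set term : ℕ → ℝ := fun i => (max 0 (c i) - Y i) ^ 2 with hterm
  have hsplit : ∀ f : ℕ → ℝ, ∑ i ∈ Finset.Icc 1 m, f i + ∑ i ∈ Finset.Icc (m+1) n, f i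
      = ∑ i ∈ Finset.Icc 1 n, f i := by
    intro f
    have h1 : Finset.Icc 1 m = Finset.Ioc 0 m := by ext x; simp; omega
    have h2 : Finset.Icc (m+1) n = Finset.Ioc m n := by ext x; simp
    have h3 : Finset.Icc 1 n = Finset.Ioc 0 n := by ext x; simp; omega
    rw [h1, h2, h3, Finset.sum_Ioc_consecutive f (Nat.zero_le m) hmn]
  have hbddF : BddBelow (Set.range F) := ⟨F (βopt, β₀opt), by rintro _ ⟨b, rfl⟩; exact hmin b⟩
  have hzF : zopt = F (βopt, β₀opt) := by
    rw [hzopt]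
    exact le_antisymm (ciInf_le hbddF (βopt, β₀opt)) (le_ciInf hmin)
  have hzterm : zopt = ∑ i ∈ Finset.Icc 1 n, term i := by
    rw [hzF, hF]
  have hz0 : 0 ≤ zopt := by
    rw [hzterm]; exact Finset.sum_nonneg fun i _ => sq_nonneg _
  have hposIcc : ∀ i ∈ Finset.Icc 1 m, 0 < Y i := by
    intro i hi
    have := Finset.mem_Icc.mp hi
    exact hYpos i this.1 this.2
  -- key pointwise comparison F ≤ fσ I
  have key : ∀ I : Finset ℕ, I ⊆ Finset.Icc 1 m → ∀ b, F b ≤ fσ I b := by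
    intro I hI b
    rw [hfσ, hF, hφ]
    rw [← hsplit (fun i => (max 0 (∑ j, X i j * b.1 j + b.2) - Y i) ^ 2)]
    rw [← Finset.sum_sdiff hI (f := fun i => (max 0 (∑ j, X i j * b.1 j + b.2) - Y i) ^ 2)]
    refine add_le_add ?_ le_rfl
    rw [add_comm]
    refine add_le_add (Finset.sum_le_sum ?_) (Finset.sum_le_sum ?_)
    · exact fun i hi => sq_max_le_sq _ _ (hposIcc i (hI hi))
    · exact fun i hi => sq_max_le_sigma _ _ (hposIcc i (Finset.mem_sdiff.mp hi).1)
  -- the bad set S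
  set S : Finset ℕ := (Finset.Icc 1 m).filter (fun i => c i ≤ 0) with hSdef
  have hSsub : S ⊆ Finset.Icc 1 m := Finset.filter_subset _ _
  -- fσ at the optimum, rewritten via c
  have hfσopt : ∀ I : Finset ℕ, fσ I (βopt, β₀opt) =
      ∑ i ∈ I, (c i - Y i) ^ 2 + ∑ i ∈ Finset.Icc 1 m \ I, sigmaFn (c i) (Y i)
      + ∑ i ∈ Finset.Icc (m+1) n, term i := by
    intro I; rw [hfσ, hφ]
  -- main upper-bound helper
  have helper : ∀ (C : Finset ℕ) (B : ℝ), S ⊆ C → C ⊆ Finset.Icc 1 m → 0 ≤ B →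
      (∀ i ∈ C \ S, (Y i)^2 ≤ B) →
      fσ (Finset.Icc 1 m \ C) (βopt, β₀opt) ≤ zopt + ((C \ S).card : ℝ) * B := by
    intro C B hSC hCm hB hYB
    rw [hfσopt]
    have hIC : Finset.Icc 1 m \ (Finset.Icc 1 m \ C) = C := by
      rw [sdiff_sdiff_right_self]; exact Finset.inter_eq_right.mpr hCm
    rw [hIC]
    have h1 : ∑ i ∈ Finset.Icc 1 m \ C, (c i - Y i) ^ 2 = ∑ i ∈ Finset.Icc 1 m \ C, term i := by
      refine Finset.sum_congr rfl fun i hi => ?_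
      obtain ⟨hiIcc, hiC⟩ := Finset.mem_sdiff.mp hi
      have hiS : i ∉ S := fun h => hiC (hSC h)
      have hpos : 0 < c i := by
        by_contra h
        push_neg at h
        exact hiS (Finset.mem_filter.mpr ⟨hiIcc, h⟩)
      simp only [hterm, max_eq_right hpos.le]
    have h2 : ∑ i ∈ C, sigmaFn (c i) (Y i) ≤ ∑ i ∈ C, term i + ((C \ S).card : ℝ) * B := by
      have hEC : C \ S ⊆ C := Finset.sdiff_subset
      have hCS : C \ (C \ S) = S := by
        rw [sdiff_sdiff_right_self]; exact Finset.inter_eq_right.mpr hSC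
      rw [← Finset.sum_sdiff hEC (f := fun i => sigmaFn (c i) (Y i)),
          ← Finset.sum_sdiff hEC (f := term), hCS]
      have hA : ∑ i ∈ S, sigmaFn (c i) (Y i) = ∑ i ∈ S, term i := by
        refine Finset.sum_congr rfl fun i hi => ?_
        obtain ⟨hiIcc, hci⟩ := Finset.mem_filter.mp hi
        have hY : 0 < Y i := hposIcc i hiIcc
        have hns : ¬ (c i > 2 * Y i) := by nlinarith
        simp only [sigmaFn, if_neg hns, hterm, max_eq_left hci]
        ring
      have hB2 : ∑ i ∈ C \ S, sigmaFn (c i) (Y i) ≤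
          ∑ i ∈ C \ S, (term i + B) := by
        refine Finset.sum_le_sum fun i hi => ?_
        have hiC := (Finset.mem_sdiff.mp hi).1
        have hY : 0 < Y i := hposIcc i (hCm hiC)
        by_cases hgt : c i > 2 * Y i
        · have : sigmaFn (c i) (Y i) = term i := by
            simp only [sigmaFn, if_pos hgt, hterm,
              max_eq_right (by nlinarith : (0:ℝ) ≤ c i)]
          rw [this]; linarith
        · have : sigmaFn (c i) (Y i) = (Y i)^2 := by simp only [sigmaFn, if_neg hgt]
          rw [this]
          have := hYB i hi
          have ht0 : 0 ≤ term i := sq_nonneg _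
          linarith
      rw [Finset.sum_add_distrib, Finset.sum_const, nsmul_eq_mul] at hB2
      linarith [hA, hB2]
    have h3 : ∑ i ∈ Finset.Icc 1 m \ C, term i + ∑ i ∈ C, term i
        + ∑ i ∈ Finset.Icc (m+1) n, term i = zopt := by
      rw [Finset.sum_sdiff hCm (f := term), hsplit term, ← hzterm]
    linarith [h1, h2, h3]
  -- boundedness facts for the infima
  have hinner_bdd : ∀ I : Finset ℕ, I ⊆ Finset.Icc 1 m →
      BddBelow (Set.range fun b => fσ I b) := by
    intro I hI
    exact ⟨zopt, by rintro _ ⟨b, rfl⟩; exact (hzF ▸ hmin b).trans (key I hI b)⟩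
  have hzle : ∀ I : Finset ℕ, I ⊆ Finset.Icc 1 m → ∀ b, zopt ≤ fσ I b := by
    intro I hI b
    exact (hzF ▸ hmin b).trans (key I hI b)
  have hempty_mem : (∅ : Finset ℕ) ∈ approxFamily m k := by
    refine ⟨Finset.empty_subset _, 1, m, ∅, le_rfl, hk1, le_rfl, by simp, by simp, by simp⟩
  haveI hfam_ne : Nonempty (approxFamily m k) := ⟨⟨∅, hempty_mem⟩⟩
  -- Part 1 : zopt ≤ zapprox
  have part1 : zopt ≤ zapprox := by
    rw [hzapprox]
    refine le_ciInf ?_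
    rintro ⟨I, hI⟩
    exact le_ciInf fun b => hzle I hI.1 b
  refine ⟨part1, ?_⟩
  -- outer BddBelow
  have houter_bdd : BddBelow (Set.range fun I : approxFamily m k =>
      ⨅ b : (Fin p → ℝ) × ℝ, fσ (I : Finset ℕ) b) := by
    refine ⟨zopt, ?_⟩
    rintro _ ⟨⟨I, hI⟩, rfl⟩
    exact le_ciInf fun b => hzle I hI.1 b
  -- generic route : enough to find a good I₀
  have route : ∀ I₀ : Finset ℕ, I₀ ∈ approxFamily m k →
      fσ I₀ (βopt, β₀opt) ≤ ((n:ℝ)/(k:ℝ)) * zopt →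
      zapprox ≤ ((n:ℝ)/(k:ℝ)) * zopt := by
    intro I₀ hmem hbound
    have h1 : zapprox ≤ ⨅ b : (Fin p → ℝ) × ℝ, fσ I₀ b := by
      rw [hzapprox]
      exact ciInf_le houter_bdd ⟨I₀, hmem⟩
    have h2 : (⨅ b : (Fin p → ℝ) × ℝ, fσ I₀ b) ≤ fσ I₀ (βopt, β₀opt) :=
      ciInf_le (hinner_bdd I₀ hmem.1) (βopt, β₀opt)
    linarith
  have hk0 : (0:ℝ) < (k:ℝ) := by exact_mod_cast hk1
  by_cases hScard : S.card < k
  -- Case A : few bad points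
  · refine route (Finset.Icc 1 m \ S) ?_ ?_
    · refine ⟨Finset.sdiff_subset, S.card + 1, 0, S, by omega, by omega, Nat.zero_le m,
        by omega, fun x hx => ?_, ?_⟩
      · have := Finset.mem_Icc.mp (hSsub hx); omega
      · have : Finset.Icc 1 0 = (∅ : Finset ℕ) := Finset.Icc_eq_empty (by omega)
        rw [this, Finset.empty_union, sdiff_sdiff_right_self]
        exact Finset.inter_eq_right.mpr hSsub
    · have := helper S 0 (le_refl S) hSsub le_rfl (by simp)
      have h1 : (1:ℝ) ≤ (n:ℝ)/(k:ℝ) := by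
        rw [le_div_iff₀ hk0]; exact_mod_cast by simpa using hkn
      nlinarith [this]
  -- Case B : many bad points
  · push_neg at hScard
    obtain ⟨T, hTsub, hTcard, hTlt⟩ := exists_top_subset (k-1) S (by omega)
    have hSTcard : (S \ T).card = S.card - (k-1) := by
      rw [Finset.card_sdiff_of_subset hTsub, hTcard]
    have hSTne : (S \ T).Nonempty := Finset.card_pos.mp (by omega)
    set i₁ : ℕ := (S \ T).max' hSTne with hi₁def
    have hi₁ST : i₁ ∈ S \ T := (S \ T).max'_mem hSTne
    have hi₁S : i₁ ∈ S := (Finset.mem_sdiff.mp hi₁ST).1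
    have hi₁Icc := Finset.mem_Icc.mp (hSsub hi₁S)
    have hci₁ : c i₁ ≤ 0 := (Finset.mem_filter.mp hi₁S).2
    have hYi₁ : 0 < Y i₁ := hYpos i₁ hi₁Icc.1 hi₁Icc.2
    set C : Finset ℕ := Finset.Icc 1 i₁ ∪ T with hCdef
    have hCm : C ⊆ Finset.Icc 1 m :=
      Finset.union_subset (Finset.Icc_subset_Icc_right hi₁Icc.2) (hTsub.trans hSsub)
    have hSC : S ⊆ C := by
      intro s hs
      by_cases hsT : s ∈ T
      · exact Finset.mem_union_right _ hsT
      · have hsST : s ∈ S \ T := Finset.mem_sdiff.mpr ⟨hs, hsT⟩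
        have h1 := (Finset.mem_Icc.mp (hSsub hs)).1
        exact Finset.mem_union_left _
          (Finset.mem_Icc.mpr ⟨h1, (S \ T).le_max' s hsST⟩)
    have hTi₁ : ∀ x ∈ T, i₁ < x := fun x hx => hTlt i₁ hi₁ST x hx
    -- membership of I₀
    have hmem : Finset.Icc 1 m \ C ∈ approxFamily m k := by
      refine ⟨Finset.sdiff_subset, k, i₁, T, hk1, le_rfl, hi₁Icc.2, hTcard,
        fun x hx => ⟨hTi₁ x hx, (Finset.mem_Icc.mp (hSsub (hTsub hx))).2⟩, ?_⟩
      rw [sdiff_sdiff_right_self, Finset.inf_eq_inter]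
      exact Finset.inter_eq_right.mpr hCm
    -- elements of C \ S lie below i₁
    have hCSsub : C \ S ⊆ Finset.Icc 1 i₁ := by
      intro i hi
      obtain ⟨hiC, hiS⟩ := Finset.mem_sdiff.mp hi
      rcases Finset.mem_union.mp hiC with h | h
      · exact h
      · exact absurd (hTsub h) hiS
    have hYB : ∀ i ∈ C \ S, (Y i)^2 ≤ (Y i₁)^2 := by
      intro i hi
      have hiI := Finset.mem_Icc.mp (hCSsub hi)
      have hYi : 0 < Y i := hYpos i hiI.1 (hiI.2.trans hi₁Icc.2)
      exact pow_le_pow_left₀ hYi.le (hYsorted i i₁ hiI.1 hiI.2 hi₁Icc.2) 2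
    -- cardinality bound : (C \ S).card + k ≤ n
    have hcnt : (C \ S).card + k ≤ n := by
      have hST_Icc : S \ T ⊆ Finset.Icc 1 i₁ := by
        intro s hs
        exact Finset.mem_Icc.mpr ⟨(Finset.mem_Icc.mp (hSsub (Finset.mem_sdiff.mp hs).1)).1,
          (S \ T).le_max' s hs⟩
      have hdisj : Disjoint (C \ S) (S \ T) :=
        Finset.disjoint_left.mpr fun a ha hb =>
          (Finset.mem_sdiff.mp ha).2 (Finset.mem_sdiff.mp hb).1
      have hun : (C \ S) ∪ (S \ T) ⊆ Finset.Icc 1 i₁ :=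
        Finset.union_subset hCSsub hST_Icc
      have h1 : (C \ S).card + (S \ T).card ≤ i₁ := by
        have := Finset.card_le_card hun
        rwa [Finset.card_union_of_disjoint hdisj, Nat.card_Icc, Nat.add_sub_cancel] at this
      have hT_Icc : T ⊆ Finset.Icc (i₁+1) m := by
        intro x hx
        exact Finset.mem_Icc.mpr ⟨hTi₁ x hx, (Finset.mem_Icc.mp (hSsub (hTsub hx))).2⟩
      have h2 := Finset.card_le_card hT_Icc
      rw [hTcard, Nat.card_Icc] at h2
      have h3 : S.card ≤ m := by
        have := Finset.card_le_card hSsub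
        rwa [Nat.card_Icc, Nat.add_sub_cancel] at this
      omega
    -- z^OPT ≥ k * (Y i₁)^2
    have hzk : (k:ℝ) * (Y i₁)^2 ≤ zopt := by
      set K : Finset ℕ := insert i₁ T with hKdef
      have hi₁T : i₁ ∉ T := (Finset.mem_sdiff.mp hi₁ST).2
      have hKcard : K.card = k := by
        rw [hKdef, Finset.card_insert_of_notMem hi₁T, hTcard]; omega
      have hKS : K ⊆ S := Finset.insert_subset hi₁S hTsub
      have hKn : K ⊆ Finset.Icc 1 n :=
        hKS.trans (hSsub.trans (Finset.Icc_subset_Icc_right hmn))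
      have hterm_ge : ∀ i ∈ K, (Y i₁)^2 ≤ term i := by
        intro i hi
        have hiS : i ∈ S := hKS hi
        obtain ⟨hiIcc, hci⟩ := Finset.mem_filter.mp hiS
        have hiIcc' := Finset.mem_Icc.mp hiIcc
        have hi₁i : i₁ ≤ i := by
          rcases Finset.mem_insert.mp hi with rfl | h
          · exact le_rfl
          · exact (hTi₁ i h).le
        have hYle : Y i₁ ≤ Y i := hYsorted i₁ i hi₁Icc.1 hi₁i hiIcc'.2
        have : term i = (Y i)^2 := by
          simp only [hterm, max_eq_left hci]; ring
        rw [this]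
        exact pow_le_pow_left₀ hYi₁.le hYle 2
      calc (k:ℝ) * (Y i₁)^2 = ∑ _i ∈ K, (Y i₁)^2 := by
            rw [Finset.sum_const, hKcard, nsmul_eq_mul]
        _ ≤ ∑ i ∈ K, term i := Finset.sum_le_sum hterm_ge
        _ ≤ ∑ i ∈ Finset.Icc 1 n, term i :=
            Finset.sum_le_sum_of_subset_of_nonneg hKn (fun i _ _ => sq_nonneg _)
        _ = zopt := hzterm.symm
    -- conclude
    refine route (Finset.Icc 1 m \ C) hmem ?_
    have hhelp := helper C ((Y i₁)^2) hSC hCm (sq_nonneg _) hYB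
    have hcntR : ((C \ S).card : ℝ) + (k:ℝ) ≤ (n:ℝ) := by exact_mod_cast hcnt
    rw [div_mul_eq_mul_div, le_div_iff₀ hk0]
    have hY20 : (0:ℝ) ≤ (Y i₁)^2 := sq_nonneg _
    have hc0 : (0:ℝ) ≤ ((C \ S).card : ℝ) := Nat.cast_nonneg _
    nlinarith [hhelp, mul_nonneg hc0 (sub_nonneg.mpr hzk),
      mul_nonneg hz0 (sub_nonneg.mpr hcntR)]
end

section
/- Assume additionally that Y_1 ≤ Y_2 ≤ … ≤ Y_m and that the problem is realizable, i.e. there exists (β*, β₀*) ∈ ℝ^p × ℝ with F(β*, β₀*) = 0. Then z^approx = 0 = z^OPT; in other words, in the realizable case the approximation algorithm attains the global optimum. -/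
/-- if `Y₁ ≤ … ≤ Y_m` and the problem is realizable (some `(β*, β₀*)` has
`F(β*, β₀*) = 0`), then `z^approx = 0 = z^OPT`: the approximation algorithm attains the
global optimum. -/
theorem approx_realizable {p n m k : ℕ} (hp : 0 < p) (hn : 0 < n) (hmn : m ≤ n)
    (hk1 : 1 ≤ k) (hkn : k ≤ n)
    (X : ℕ → Fin p → ℝ) (Y : ℕ → ℝ)
    (hYpos : ∀ i, 1 ≤ i → i ≤ m → 0 < Y i)
    (hYneg : ∀ i, m < i → i ≤ n → Y i ≤ 0)
    (hYsorted : ∀ i j, 1 ≤ i → i ≤ j → j ≤ m → Y i ≤ Y j)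
    (F : (Fin p → ℝ) × ℝ → ℝ)
    (hF : ∀ b, F b =
      ∑ i ∈ Finset.Icc 1 n, (max 0 (∑ j, X i j * b.1 j + b.2) - Y i) ^ 2)
    (φ : (Fin p → ℝ) × ℝ → ℝ)
    (hφ : ∀ b, φ b =
      ∑ i ∈ Finset.Icc (m + 1) n, (max 0 (∑ j, X i j * b.1 j + b.2) - Y i) ^ 2)
    (fσ : Finset ℕ → (Fin p → ℝ) × ℝ → ℝ)
    (hfσ : ∀ I b, fσ I b =
      ∑ i ∈ I, ((∑ j, X i j * b.1 j + b.2) - Y i) ^ 2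
      + ∑ i ∈ Finset.Icc 1 m \ I, sigmaFn (∑ j, X i j * b.1 j + b.2) (Y i)
      + φ b)
    (hrealizable : ∃ b : (Fin p → ℝ) × ℝ, F b = 0)
    (zopt zapprox : ℝ)
    (hzopt : zopt = ⨅ b : (Fin p → ℝ) × ℝ, F b)
    (hzapprox : zapprox =
      ⨅ I : approxFamily m k, ⨅ b : (Fin p → ℝ) × ℝ, fσ (I : Finset ℕ) b) :
    zapprox = 0 ∧ zopt = 0 := by

  obtain ⟨b₀, hb₀⟩ := hrealizable
  have hterm : ∀ i ∈ Finset.Icc 1 n,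
      (max 0 (∑ j, X i j * b₀.1 j + b₀.2) - Y i) ^ 2 = 0 := by
    have h0 : ∑ i ∈ Finset.Icc 1 n, (max 0 (∑ j, X i j * b₀.1 j + b₀.2) - Y i) ^ 2 = 0 := by
      rw [← hF]; exact hb₀
    exact (Finset.sum_eq_zero_iff_of_nonneg (fun i _ => sq_nonneg _)).mp h0
  have hmax : ∀ i ∈ Finset.Icc 1 n, max 0 (∑ j, X i j * b₀.1 j + b₀.2) = Y i := by
    intro i hi
    have h := hterm i hi
    have := pow_eq_zero_iff (n := 2) (by norm_num) |>.mp h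
    linarith [sub_eq_zero.mp this]
  have hg : ∀ i ∈ Finset.Icc 1 m, (∑ j, X i j * b₀.1 j + b₀.2) = Y i := by
    intro i hi
    rw [Finset.mem_Icc] at hi
    have hY := hYpos i hi.1 hi.2
    have hm := hmax i (Finset.mem_Icc.mpr ⟨hi.1, hi.2.trans hmn⟩)
    rcases le_or_gt (∑ j, X i j * b₀.1 j + b₀.2) 0 with h | h
    · rw [max_eq_left h] at hm; linarith
    · rwa [max_eq_right h.le] at hm
  have hφ0 : φ b₀ = 0 := by
    rw [hφ]
    refine Finset.sum_eq_zero fun i hi => ?_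
    rw [Finset.mem_Icc] at hi
    exact hterm i (Finset.mem_Icc.mpr ⟨by omega, hi.2⟩)
  have hfσ0 : fσ (Finset.Icc 1 m) b₀ = 0 := by
    rw [hfσ, hφ0, Finset.sdiff_self, Finset.sum_empty]
    rw [Finset.sum_eq_zero fun i hi => by rw [hg i hi]; ring]
    ring
  have hfσ_nonneg : ∀ I b, 0 ≤ fσ I b := by
    intro I b
    rw [hfσ]
    have h1 : (0:ℝ) ≤ ∑ i ∈ I, ((∑ j, X i j * b.1 j + b.2) - Y i) ^ 2 :=
      Finset.sum_nonneg fun i _ => sq_nonneg _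
    have h2 : (0:ℝ) ≤ ∑ i ∈ Finset.Icc 1 m \ I, sigmaFn (∑ j, X i j * b.1 j + b.2) (Y i) := by
      refine Finset.sum_nonneg fun i _ => ?_
      unfold sigmaFn; split <;> positivity
    have h3 : (0:ℝ) ≤ φ b := by
      rw [hφ]; exact Finset.sum_nonneg fun i _ => sq_nonneg _
    linarith
  have hinner_nonneg : ∀ I : Finset ℕ, (0:ℝ) ≤ ⨅ b : (Fin p → ℝ) × ℝ, fσ I b :=
    fun I => le_ciInf (hfσ_nonneg I)
  have hbdd : ∀ I : Finset ℕ, BddBelow (Set.range (fun b : (Fin p → ℝ) × ℝ => fσ I b)) :=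
    fun I => ⟨0, fun x hx => by obtain ⟨b, rfl⟩ := hx; exact hfσ_nonneg I b⟩
  have hinner0 : (⨅ b : (Fin p → ℝ) × ℝ, fσ (Finset.Icc 1 m) b) = 0 := by
    refine le_antisymm ?_ (hinner_nonneg _)
    have := ciInf_le (hbdd (Finset.Icc 1 m)) b₀
    rwa [hfσ0] at this
  have hI₀ : (Finset.Icc 1 m) ∈ approxFamily m k := by
    refine ⟨le_refl _, 1, 0, ∅, le_refl 1, hk1, Nat.zero_le m, by simp, by simp, by simp⟩
  haveI : Nonempty (approxFamily m k) := ⟨⟨Finset.Icc 1 m, hI₀⟩⟩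
  have hzopt0 : zopt = 0 := by
    rw [hzopt]
    refine le_antisymm ?_ (le_ciInf fun b => by rw [hF]; exact Finset.sum_nonneg fun i _ => sq_nonneg _)
    have hb : BddBelow (Set.range F) := ⟨0, fun x hx => by
      obtain ⟨b, rfl⟩ := hx
      rw [hF]; exact Finset.sum_nonneg fun i _ => sq_nonneg _⟩
    have := ciInf_le hb b₀
    rwa [hb₀] at this
  refine ⟨?_, hzopt0⟩
  rw [hzapprox]
  refine le_antisymm ?_ (le_ciInf fun I => hinner_nonneg _)
  have hb : BddBelow (Set.range fun I : approxFamily m k =>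
      ⨅ b : (Fin p → ℝ) × ℝ, fσ (I : Finset ℕ) b) :=
    ⟨0, fun x hx => by obtain ⟨I, rfl⟩ := hx; exact hinner_nonneg _⟩
  have := ciInf_le hb (⟨Finset.Icc 1 m, hI₀⟩ : approxFamily m k)
  rwa [hinner0] at this
end

section
/- For every real β₀, the infimum over x ∈ ℝ of θ(x, β₀) equals 2β₀² − 4β₀ + 2 when β₀ ≥ 1 − √2/2, and equals 1 when β₀ ≤ 1 − √2/2. -/
/-- `θ(x, β₀) = (max{0, x + β₀} − 1)² + (max{0, −x + β₀} − 1)²`. -/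
noncomputable def thetaFn (x β₀ : ℝ) : ℝ :=
  (max 0 (x + β₀) - 1) ^ 2 + (max 0 (-x + β₀) - 1) ^ 2

/-- for every real `β₀`, the infimum over `x ∈ ℝ` of `θ(x, β₀)` equals
`2β₀² − 4β₀ + 2` when `β₀ ≥ 1 − √2/2`, and equals `1` when `β₀ ≤ 1 − √2/2`. -/
theorem thetaFn_inf (β₀ : ℝ) :
    (1 - Real.sqrt 2 / 2 ≤ β₀ → (⨅ x : ℝ, thetaFn x β₀) = 2 * β₀ ^ 2 - 4 * β₀ + 2)
    ∧ (β₀ ≤ 1 - Real.sqrt 2 / 2 → (⨅ x : ℝ, thetaFn x β₀) = 1) := by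
  have hs0 : (0:ℝ) ≤ Real.sqrt 2 := Real.sqrt_nonneg 2
  have hs2 : Real.sqrt 2 ^ 2 = 2 := Real.sq_sqrt (by norm_num)
  constructor
  · intro hb
    have hβpos : 0 < β₀ := by nlinarith
    have hlb : ∀ x, 2 * β₀ ^ 2 - 4 * β₀ + 2 ≤ thetaFn x β₀ := by
      intro x
      unfold thetaFn
      rcases le_or_gt (x + β₀) 0 with h1 | h1 <;> rcases le_or_gt (-x + β₀) 0 with h2 | h2
      · rw [max_eq_left h1, max_eq_left h2]; nlinarith
      · rw [max_eq_left h1, max_eq_right h2.le]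
        nlinarith [sq_nonneg (-x + β₀ - 1), sq_nonneg β₀,
          mul_nonneg (by linarith : (0:ℝ) ≤ -x - β₀) (by linarith : (0:ℝ) ≤ -x + β₀),
          mul_nonneg (by linarith : (0:ℝ) ≤ -x - β₀) hβpos.le,
          sq_nonneg (2 * β₀ - 1), sq_nonneg (Real.sqrt 2 / 2 - 1 + β₀)]
      · rw [max_eq_right h1.le, max_eq_left h2]
        nlinarith [sq_nonneg (x + β₀ - 1), sq_nonneg β₀,
          mul_nonneg (by linarith : (0:ℝ) ≤ x - β₀) (by linarith : (0:ℝ) ≤ x + β₀),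
          mul_nonneg (by linarith : (0:ℝ) ≤ x - β₀) hβpos.le,
          sq_nonneg (2 * β₀ - 1), sq_nonneg (Real.sqrt 2 / 2 - 1 + β₀)]
      · rw [max_eq_right h1.le, max_eq_right h2.le]; nlinarith [sq_nonneg x]
    have hbdd : BddBelow (Set.range fun x => thetaFn x β₀) := by
      refine ⟨2 * β₀ ^ 2 - 4 * β₀ + 2, ?_⟩
      rintro y ⟨x, rfl⟩; exact hlb x
    refine le_antisymm ?_ (le_ciInf hlb)
    calc (⨅ x : ℝ, thetaFn x β₀) ≤ thetaFn 0 β₀ := ciInf_le hbdd 0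
      _ = 2 * β₀ ^ 2 - 4 * β₀ + 2 := by
          unfold thetaFn
          rw [zero_add, neg_zero, zero_add, max_eq_right hβpos.le]; ring
  · intro hb
    have hlb : ∀ x, (1:ℝ) ≤ thetaFn x β₀ := by
      intro x
      unfold thetaFn
      rcases le_or_gt (x + β₀) 0 with h1 | h1 <;> rcases le_or_gt (-x + β₀) 0 with h2 | h2
      · rw [max_eq_left h1, max_eq_left h2]; norm_num
      · rw [max_eq_left h1, max_eq_right h2.le]; nlinarith [sq_nonneg (-x + β₀ - 1)]
      · rw [max_eq_right h1.le, max_eq_left h2]; nlinarith [sq_nonneg (x + β₀ - 1)]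
      · rw [max_eq_right h1.le, max_eq_right h2.le]
        nlinarith [sq_nonneg x, sq_nonneg (1 - β₀ - Real.sqrt 2 / 2)]
    have hbdd : BddBelow (Set.range fun x => thetaFn x β₀) := by
      refine ⟨1, ?_⟩
      rintro y ⟨x, rfl⟩; exact hlb x
    refine le_antisymm ?_ (le_ciInf hlb)
    calc (⨅ x : ℝ, thetaFn x β₀) ≤ thetaFn (1 - β₀) β₀ := ciInf_le hbdd (1 - β₀)
      _ = 1 := by
          unfold thetaFn
          have e1 : 1 - β₀ + β₀ = 1 := by ring
          have e2 : -(1 - β₀) + β₀ = 2 * β₀ - 1 := by ring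
          rw [e1, e2, max_eq_right (by norm_num : (0:ℝ) ≤ 1),
            max_eq_left (by nlinarith : 2 * β₀ - 1 ≤ 0)]
          norm_num
end

section
/- Let γ > 0 and Δ ≥ 0. Let U and V be independent real-valued random variables with finite second moments such that V has the centered Gaussian distribution N(0, γ²), E[U² · 1_{U ≤ 0}] ≤ Δ², and −E[U · 1_{U ≤ 0}] ≤ 1 + Δ². Then E[(U − V)² · 1_{V > 0} · 1_{U ≤ 0}] ≤ Δ²/2 + ((2 + 2Δ²)/√(2π)) · γ + γ²/2. -/
open Real MeasureTheory ProbabilityTheory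

open Set Filter in
private lemma myI1 {b : ℝ} (hb : 0 < b) :
    ∫ x in Set.Ioi (0:ℝ), x * rexp (-b * x ^ 2) = (2 * b)⁻¹ := by
  have hb' : (2:ℝ) * b ≠ 0 := by positivity
  have A : ∀ x : ℝ, HasDerivAt (fun x : ℝ => -(2 * b)⁻¹ * rexp (-b * x ^ 2))
      (x * rexp (-b * x ^ 2)) x := by
    intro x
    refine (((hasDerivAt_pow 2 x).const_mul (-b)).exp.const_mul (-(2 * b)⁻¹)).congr_deriv ?_
    field_simp
    ring
  have h1 : Tendsto (fun y : ℝ => b * y ^ 2) atTop atTop :=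
    (tendsto_pow_atTop two_ne_zero).const_mul_atTop hb
  have h2 : Tendsto (fun y : ℝ => -b * y ^ 2) atTop atBot :=
    (tendsto_neg_atTop_atBot.comp h1).congr (fun y => by simp [Function.comp, neg_mul])
  have B : Tendsto (fun y : ℝ => -(2 * b)⁻¹ * rexp (-b * y ^ 2)) atTop
      (nhds (-(2 * b)⁻¹ * 0)) :=
    Tendsto.const_mul _ (Real.tendsto_exp_atBot.comp h2)
  have key := integral_Ioi_of_hasDerivAt_of_tendsto' (a := (0:ℝ)) (fun x _ => A x)
      (integrable_mul_exp_neg_mul_sq hb).integrableOn B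
  rw [key]
  norm_num

open Set Filter in
private lemma myI2 {b : ℝ} (hb : 0 < b) :
    ∫ x in Set.Ioi (0:ℝ), x ^ 2 * rexp (-b * x ^ 2)
      = (2 * b)⁻¹ * (Real.sqrt (π / b) / 2) := by
  have hb' : (2:ℝ) * b ≠ 0 := by positivity
  have A : ∀ x : ℝ, HasDerivAt (fun x : ℝ => -(2 * b)⁻¹ * (x * rexp (-b * x ^ 2)))
      (x ^ 2 * rexp (-b * x ^ 2) - (2 * b)⁻¹ * rexp (-b * x ^ 2)) x := by
    intro x
    have hx : HasDerivAt (fun x : ℝ => x * rexp (-b * x ^ 2))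
        (1 * rexp (-b * x ^ 2) + x * (rexp (-b * x ^ 2) * (-b * (2 * x ^ 1)))) x :=
      (hasDerivAt_id x).mul (((hasDerivAt_pow 2 x).const_mul (-b)).exp)
    refine (hx.const_mul (-(2 * b)⁻¹)).congr_deriv ?_
    field_simp
    ring
  have h2 : IntegrableOn (fun x : ℝ => x ^ 2 * rexp (-b * x ^ 2)) (Set.Ioi 0) := by
    have h := integrableOn_rpow_mul_exp_neg_mul_sq hb (s := 2) (by norm_num)
    have : (fun x : ℝ => x ^ (2:ℝ) * rexp (-b * x ^ 2))
        = fun x : ℝ => x ^ 2 * rexp (-b * x ^ 2) := by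
      funext x
      rw [show (2:ℝ) = ((2:ℕ):ℝ) by norm_num, Real.rpow_natCast]
    rwa [this] at h
  have he : IntegrableOn (fun x : ℝ => rexp (-b * x ^ 2)) (Set.Ioi 0) :=
    (integrable_exp_neg_mul_sq hb).integrableOn
  have hT : Tendsto (fun x : ℝ => x * rexp (-b * x ^ 2)) atTop (nhds 0) := by
    have h := rpow_mul_exp_neg_mul_sq_isLittleO_exp_neg hb 1
    simp only [Real.rpow_one] at h
    have hexp : Tendsto (fun x : ℝ => rexp (-(1/2) * x)) atTop (nhds 0) := by
      refine Real.tendsto_exp_atBot.comp ?_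
      exact (tendsto_neg_atTop_atBot.comp (tendsto_id.const_mul_atTop (by norm_num : (0:ℝ) < 1/2))).congr
        (fun y => by simp [Function.comp]; try ring)
    exact h.trans_tendsto hexp
  have B : Tendsto (fun x : ℝ => -(2 * b)⁻¹ * (x * rexp (-b * x ^ 2))) atTop
      (nhds (-(2 * b)⁻¹ * 0)) := Tendsto.const_mul _ hT
  have key := integral_Ioi_of_hasDerivAt_of_tendsto' (fun x _ => A x)
      (h2.sub (he.const_mul _)) B
  rw [integral_sub h2 (he.const_mul _), integral_const_mul, integral_gaussian_Ioi] at key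
  simp only [mul_zero, zero_pow, Real.exp_zero, mul_one, zero_mul] at key
  linarith [key]

private lemma gauss_int {γ : ℝ} (hγ : 0 < γ) (g : ℝ → ℝ) :
    ∫ x, g x ∂(gaussianReal 0 (Real.toNNReal (γ ^ 2)))
      = ∫ x, gaussianPDFReal 0 (Real.toNNReal (γ ^ 2)) x * g x := by
  set v : NNReal := Real.toNNReal (γ ^ 2) with hvdef
  have hv : v ≠ 0 := by
    simp only [hvdef, ne_eq, Real.toNNReal_eq_zero, not_le]
    positivity
  rw [gaussianReal_of_var_ne_zero 0 hv]
  have hmeq : gaussianPDF 0 v = fun x => ((Real.toNNReal (gaussianPDFReal 0 v x) : NNReal) : ENNReal) := rfl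
  rw [hmeq]
  rw [integral_withDensity_eq_integral_smul
    ((measurable_gaussianPDFReal 0 v).real_toNNReal) g]
  congr 1
  funext x
  rw [NNReal.smul_def, Real.coe_toNNReal _ (gaussianPDFReal_nonneg _ _ _), smul_eq_mul]

private lemma pdf_eq {γ : ℝ} (hγ : 0 < γ) (x : ℝ) :
    gaussianPDFReal 0 (Real.toNNReal (γ ^ 2)) x
      = (Real.sqrt (2 * π * γ ^ 2))⁻¹ * rexp (-(2 * γ ^ 2)⁻¹ * x ^ 2) := by
  have hcoe : ((Real.toNNReal (γ ^ 2) : NNReal) : ℝ) = γ ^ 2 :=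
    Real.coe_toNNReal _ (sq_nonneg γ)
  rw [gaussianPDFReal, hcoe, sub_zero]
  congr 1
  field_simp

private lemma gauss_moments {γ : ℝ} (hγ : 0 < γ) :
    (∫ x, (if 0 < x then (1:ℝ) else 0) ∂(gaussianReal 0 (Real.toNNReal (γ ^ 2))) = 1 / 2)
    ∧ (∫ x, x * (if 0 < x then (1:ℝ) else 0) ∂(gaussianReal 0 (Real.toNNReal (γ ^ 2)))
        = γ / Real.sqrt (2 * π))
    ∧ (∫ x, x ^ 2 * (if 0 < x then (1:ℝ) else 0) ∂(gaussianReal 0 (Real.toNNReal (γ ^ 2)))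
        = γ ^ 2 / 2) := by
  set b : ℝ := (2 * γ ^ 2)⁻¹ with hbdef
  have hb : 0 < b := by positivity
  have hπb : π / b = 2 * π * γ ^ 2 := by
    rw [hbdef]; field_simp; try ring
  have hsq : (0:ℝ) < Real.sqrt (2 * π * γ ^ 2) := Real.sqrt_pos.2 (by positivity)
  have hsqrt_eq : Real.sqrt (2 * π * γ ^ 2) = Real.sqrt (2 * π) * γ := by
    rw [show 2 * π * γ ^ 2 = (2 * π) * γ ^ 2 by ring, Real.sqrt_mul (by positivity),
      Real.sqrt_sq hγ.le]
  have h2b : (2 * b)⁻¹ = γ ^ 2 := by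
    rw [hbdef]; field_simp; try ring
  -- generic reduction
  have hred : ∀ g : ℝ → ℝ,
      ∫ x, g x * (if 0 < x then (1:ℝ) else 0) ∂(gaussianReal 0 (Real.toNNReal (γ ^ 2)))
        = (Real.sqrt (2 * π * γ ^ 2))⁻¹ * ∫ x in Set.Ioi (0:ℝ), g x * rexp (-b * x ^ 2) := by
    intro g
    rw [gauss_int hγ]
    have hind : (fun x => gaussianPDFReal 0 (Real.toNNReal (γ ^ 2)) x
          * (g x * if 0 < x then (1:ℝ) else 0))
        = Set.indicator (Set.Ioi (0:ℝ))
          (fun x => (Real.sqrt (2 * π * γ ^ 2))⁻¹ * (g x * rexp (-b * x ^ 2))) := by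
      funext x
      rw [pdf_eq hγ]
      by_cases hx : 0 < x
      · simp only [hx, if_true, Set.indicator_of_mem (Set.mem_Ioi.2 hx)]
        ring
      · simp [Set.indicator_of_notMem, hx, Set.mem_Ioi]
    rw [hind, integral_indicator measurableSet_Ioi, integral_const_mul]
  have hA : ∫ x, (if 0 < x then (1:ℝ) else 0)
      ∂(gaussianReal 0 (Real.toNNReal (γ ^ 2))) = 1 / 2 := by
    have := hred (fun _ => 1)
    simp only [one_mul] at this
    rw [this, integral_gaussian_Ioi, hπb]
    field_simp
  have hB : ∫ x, x * (if 0 < x then (1:ℝ) else 0)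
      ∂(gaussianReal 0 (Real.toNNReal (γ ^ 2))) = γ / Real.sqrt (2 * π) := by
    rw [show ∫ x, x * (if 0 < x then (1:ℝ) else 0) ∂(gaussianReal 0 (Real.toNNReal (γ ^ 2)))
        = (Real.sqrt (2 * π * γ ^ 2))⁻¹ * ∫ x in Set.Ioi (0:ℝ), x * rexp (-b * x ^ 2)
      from hred (fun x => x), myI1 hb, h2b, hsqrt_eq]
    have h2π : (0:ℝ) < Real.sqrt (2 * π) := Real.sqrt_pos.2 (by positivity)
    field_simp
  have hC : ∫ x, x ^ 2 * (if 0 < x then (1:ℝ) else 0)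
      ∂(gaussianReal 0 (Real.toNNReal (γ ^ 2))) = γ ^ 2 / 2 := by
    rw [show ∫ x, x ^ 2 * (if 0 < x then (1:ℝ) else 0) ∂(gaussianReal 0 (Real.toNNReal (γ ^ 2)))
        = (Real.sqrt (2 * π * γ ^ 2))⁻¹ * ∫ x in Set.Ioi (0:ℝ), x ^ 2 * rexp (-b * x ^ 2)
      from hred (fun x => x ^ 2), myI2 hb, h2b, hπb]
    field_simp
  exact ⟨hA, hB, hC⟩

/-- let `γ > 0`, `Δ ≥ 0`, and let `U, V` be independent real random variables
with finite second moments, `V ~ N(0, γ²)`, `E[U² 1_{U ≤ 0}] ≤ Δ²`, and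
`−E[U 1_{U ≤ 0}] ≤ 1 + Δ²`. Then
`E[(U − V)² 1_{V > 0} 1_{U ≤ 0}] ≤ Δ²/2 + ((2 + 2Δ²)/√(2π)) γ + γ²/2`. -/
theorem truncated_cross_moment_bound {Ω : Type*} [MeasurableSpace Ω]
    (μ : Measure Ω) [IsProbabilityMeasure μ]
    (γ Δ : ℝ) (hγ : 0 < γ) (hΔ : 0 ≤ Δ)
    (U V : Ω → ℝ) (hU : Measurable U) (hV : Measurable V)
    (hUV : IndepFun U V μ)
    (hU2 : Integrable (fun ω => (U ω) ^ 2) μ)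
    (hV2 : Integrable (fun ω => (V ω) ^ 2) μ)
    (hVlaw : Measure.map V μ = gaussianReal 0 (Real.toNNReal (γ ^ 2)))
    (hU2trunc : ∫ ω, (U ω) ^ 2 * (if U ω ≤ 0 then (1 : ℝ) else 0) ∂μ ≤ Δ ^ 2)
    (hU1trunc : -∫ ω, U ω * (if U ω ≤ 0 then (1 : ℝ) else 0) ∂μ ≤ 1 + Δ ^ 2) :
    ∫ ω, (U ω - V ω) ^ 2 * (if 0 < V ω then (1 : ℝ) else 0)
        * (if U ω ≤ 0 then (1 : ℝ) else 0) ∂μ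
      ≤ Δ ^ 2 / 2 + (2 + 2 * Δ ^ 2) / Real.sqrt (2 * π) * γ + γ ^ 2 / 2 := by
  set f1 : ℝ → ℝ := fun t => t ^ 2 * (if t ≤ 0 then (1:ℝ) else 0) with hf1def
  set f2 : ℝ → ℝ := fun t => t * (if t ≤ 0 then (1:ℝ) else 0) with hf2def
  set f3 : ℝ → ℝ := fun t => (if t ≤ 0 then (1:ℝ) else 0) with hf3def
  set g1 : ℝ → ℝ := fun t => (if 0 < t then (1:ℝ) else 0) with hg1def
  set g2 : ℝ → ℝ := fun t => t * (if 0 < t then (1:ℝ) else 0) with hg2def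
  set g3 : ℝ → ℝ := fun t => t ^ 2 * (if 0 < t then (1:ℝ) else 0) with hg3def
  have mite : Measurable (fun t : ℝ => (if t ≤ 0 then (1:ℝ) else 0)) :=
    Measurable.ite measurableSet_Iic measurable_const measurable_const
  have mite' : Measurable (fun t : ℝ => (if 0 < t then (1:ℝ) else 0)) :=
    Measurable.ite measurableSet_Ioi measurable_const measurable_const
  have mf1 : Measurable f1 := (measurable_id.pow_const 2).mul mite
  have mf2 : Measurable f2 := measurable_id.mul mite
  have mf3 : Measurable f3 := mite
  have mg1 : Measurable g1 := mite'
  have mg2 : Measurable g2 := measurable_id.mul mite'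
  have mg3 : Measurable g3 := (measurable_id.pow_const 2).mul mite'
  -- pointwise identity
  have hpt : ∀ ω, (U ω - V ω) ^ 2 * (if 0 < V ω then (1 : ℝ) else 0)
        * (if U ω ≤ 0 then (1 : ℝ) else 0)
      = f1 (U ω) * g1 (V ω) - 2 * (f2 (U ω) * g2 (V ω)) + f3 (U ω) * g3 (V ω) := by
    intro ω
    simp only [hf1def, hf2def, hf3def, hg1def, hg2def, hg3def]
    by_cases h1 : U ω ≤ 0 <;> by_cases h2 : 0 < V ω <;> simp [h1, h2] <;> ring
  -- integrability
  have ha : Integrable (fun ω => f1 (U ω) * g1 (V ω)) μ := by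
    refine Integrable.mono' hU2 (((mf1.comp hU).mul (mg1.comp hV)).aestronglyMeasurable)
      (Filter.Eventually.of_forall fun ω => ?_)
    simp only [hf1def, hg1def, Function.comp]
    by_cases h1 : U ω ≤ 0 <;> by_cases h2 : 0 < V ω <;>
      simp [h1, h2, abs_of_nonneg (sq_nonneg (U ω)), sq_nonneg]
  have hb : Integrable (fun ω => f2 (U ω) * g2 (V ω)) μ := by
    refine Integrable.mono' (((hU2.add hV2).div_const 2))
      (((mf2.comp hU).mul (mg2.comp hV)).aestronglyMeasurable)
      (Filter.Eventually.of_forall fun ω => ?_)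
    simp only [hf2def, hg2def, Function.comp, Pi.add_apply]
    by_cases h1 : U ω ≤ 0 <;> by_cases h2 : 0 < V ω
    · simp only [h1, h2, if_true, mul_one, Real.norm_eq_abs, abs_mul]
      nlinarith [sq_nonneg (|U ω| - |V ω|), sq_abs (U ω), sq_abs (V ω),
        abs_nonneg (U ω), abs_nonneg (V ω)]
    all_goals (simp [h1, h2] <;> positivity)
  have hc : Integrable (fun ω => f3 (U ω) * g3 (V ω)) μ := by
    refine Integrable.mono' hV2 (((mf3.comp hU).mul (mg3.comp hV)).aestronglyMeasurable)
      (Filter.Eventually.of_forall fun ω => ?_)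
    simp only [hf3def, hg3def, Function.comp]
    by_cases h1 : U ω ≤ 0 <;> by_cases h2 : 0 < V ω <;>
      simp [h1, h2, abs_of_nonneg (sq_nonneg (V ω)), sq_nonneg]
  -- split the integral
  have hsplit : ∫ ω, (U ω - V ω) ^ 2 * (if 0 < V ω then (1 : ℝ) else 0)
        * (if U ω ≤ 0 then (1 : ℝ) else 0) ∂μ
      = (∫ ω, f1 (U ω) * g1 (V ω) ∂μ) - 2 * (∫ ω, f2 (U ω) * g2 (V ω) ∂μ)
        + ∫ ω, f3 (U ω) * g3 (V ω) ∂μ := by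
    rw [show (fun ω => (U ω - V ω) ^ 2 * (if 0 < V ω then (1 : ℝ) else 0)
        * (if U ω ≤ 0 then (1 : ℝ) else 0))
      = fun ω => f1 (U ω) * g1 (V ω) - 2 * (f2 (U ω) * g2 (V ω)) + f3 (U ω) * g3 (V ω)
      from funext hpt]
    have hab : Integrable (fun ω => f1 (U ω) * g1 (V ω) - 2 * (f2 (U ω) * g2 (V ω))) μ :=
      ha.sub (hb.const_mul 2)
    rw [integral_add hab hc, integral_sub ha (hb.const_mul 2), integral_const_mul]
  -- independence factorization
  have hfac : ∀ (f g : ℝ → ℝ), Measurable f → Measurable g →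
      ∫ ω, f (U ω) * g (V ω) ∂μ = (∫ ω, f (U ω) ∂μ) * ∫ ω, g (V ω) ∂μ := by
    intro f g mf mg
    exact (hUV.comp mf mg).integral_fun_mul_eq_mul_integral ((mf.comp hU).aestronglyMeasurable)
      ((mg.comp hV).aestronglyMeasurable)
  -- law transport
  have htrans : ∀ (g : ℝ → ℝ), Measurable g →
      ∫ ω, g (V ω) ∂μ = ∫ x, g x ∂(gaussianReal 0 (Real.toNNReal (γ ^ 2))) := by
    intro g mg
    rw [← hVlaw, integral_map hV.aemeasurable mg.aestronglyMeasurable]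
  obtain ⟨hA, hB, hC⟩ := gauss_moments hγ
  have hg1int : ∫ ω, g1 (V ω) ∂μ = 1 / 2 := by rw [htrans g1 mg1]; exact hA
  have hg2int : ∫ ω, g2 (V ω) ∂μ = γ / Real.sqrt (2 * π) := by
    rw [htrans g2 mg2]; exact hB
  have hg3int : ∫ ω, g3 (V ω) ∂μ = γ ^ 2 / 2 := by rw [htrans g3 mg3]; exact hC
  -- U side quantities
  set A1 := ∫ ω, f1 (U ω) ∂μ with hA1def
  set A2 := ∫ ω, f2 (U ω) ∂μ with hA2def
  set A3 := ∫ ω, f3 (U ω) ∂μ with hA3def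
  have hA1 : A1 ≤ Δ ^ 2 := hU2trunc
  have hA2 : -A2 ≤ 1 + Δ ^ 2 := hU1trunc
  have hf3int : Integrable (fun ω => f3 (U ω)) μ := by
    refine Integrable.mono' (integrable_const 1) ((mf3.comp hU).aestronglyMeasurable)
      (Filter.Eventually.of_forall fun ω => ?_)
    simp only [hf3def, Function.comp]
    by_cases h1 : U ω ≤ 0 <;> simp [h1]
  have hA3le : A3 ≤ 1 := by
    calc A3 ≤ ∫ _, (1:ℝ) ∂μ := by
          refine integral_mono hf3int (integrable_const 1) fun ω => ?_
          simp only [hf3def]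
          by_cases h1 : U ω ≤ 0 <;> simp [h1]
      _ = 1 := by simp
  -- final computation
  have hs : (0:ℝ) ≤ γ / Real.sqrt (2 * π) := by positivity
  have hsq : (0:ℝ) < Real.sqrt (2 * π) := Real.sqrt_pos.2 (by positivity)
  have hrhs : (2 + 2 * Δ ^ 2) / Real.sqrt (2 * π) * γ
      = 2 * (1 + Δ ^ 2) * (γ / Real.sqrt (2 * π)) := by
    ring
  rw [hsplit, hfac f1 g1 mf1 mg1, hfac f2 g2 mf2 mg2, hfac f3 g3 mf3 mg3,
    hg1int, hg2int, hg3int, ← hA1def, ← hA2def, ← hA3def, hrhs]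
  have ht1 : A1 * (1 / 2) ≤ Δ ^ 2 / 2 := by linarith
  have ht2 : -(2 * (A2 * (γ / Real.sqrt (2 * π)))) ≤ 2 * (1 + Δ ^ 2) * (γ / Real.sqrt (2 * π)) := by
    have := mul_le_mul_of_nonneg_right hA2 hs
    nlinarith
  have ht3 : A3 * (γ ^ 2 / 2) ≤ γ ^ 2 / 2 := by
    have h0 : (0:ℝ) ≤ γ ^ 2 / 2 := by positivity
    nlinarith
  linarith
end

section
/- Let γ > 0 and Δ ≥ 0. Let Z and ε be independent real-valued random variables with finite second moments such that ε has the centered Gaussian distribution N(0, γ²), E[Z² · 1_{Z ≤ 0}] ≤ Δ², and −E[Z · 1_{Z ≤ 0}] ≤ 1 + Δ². Set Y = max{0, Z} + ε. Then E[ψ₀(Z, Y)] ≤ 3γ²/2 + Δ²/2 + ((2 + 2Δ²)/√(2π)) · γ, where ψ₀(z, y) = (z − y)² if y > 0 and ψ₀(z, y) = (max{0, z} − y)² if y ≤ 0. -/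
open Real MeasureTheory ProbabilityTheory

/-- `ψ₀(z, y) = (z − y)²` if `y > 0`, and `ψ₀(z, y) = (max{0, z} − y)²` if `y ≤ 0`. -/
noncomputable def psiZero (z y : ℝ) : ℝ :=
  if 0 < y then (z - y) ^ 2 else (max 0 z - y) ^ 2

open Filter Set in
lemma aux_tendsto_mul_exp {b : ℝ} (hb : 0 < b) :
    Filter.Tendsto (fun x : ℝ => x * Real.exp (-b * x ^ 2)) Filter.atTop (nhds 0) := by
  have h := (rpow_mul_exp_neg_mul_sq_isLittleO_exp_neg hb 1).isBigO.trans_tendsto ?_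
  · simpa [Real.rpow_one] using h
  · refine Real.tendsto_exp_atBot.comp ?_
    have : Filter.Tendsto (fun x : ℝ => -(1/2) * x) atTop atBot := by
      apply Filter.Tendsto.const_mul_atTop_of_neg (by norm_num) tendsto_id
    exact this

open Filter Set in
lemma aux_integral_Ioi_mul_exp {b : ℝ} (hb : 0 < b) :
    ∫ x in Set.Ioi (0:ℝ), x * Real.exp (-b * x ^ 2) = (2 * b)⁻¹ := by
  have hb' : b ≠ 0 := hb.ne'
  have A : ∀ x ∈ Set.Ici (0:ℝ), HasDerivAt (fun x : ℝ => -(2*b)⁻¹ * Real.exp (-b * x ^ 2))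
      (x * Real.exp (-b * x ^ 2)) x := by
    intro x _
    have h1 : HasDerivAt (fun x : ℝ => -b * x ^ 2) (-b * (2 * x ^ 1)) x :=
      (hasDerivAt_pow 2 x).const_mul (-b)
    have h2 := h1.exp.const_mul (-(2*b)⁻¹)
    refine h2.congr_deriv ?_
    field_simp
  have B : Filter.Tendsto (fun x : ℝ => -(2*b)⁻¹ * Real.exp (-b * x ^ 2)) atTop (nhds 0) := by
    have h0 : Filter.Tendsto (fun x : ℝ => Real.exp (-b * x ^ 2)) atTop (nhds 0) :=
      Real.tendsto_exp_atBot.comp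
        ((tendsto_pow_atTop two_ne_zero).const_mul_atTop_of_neg (neg_lt_zero.2 hb))
    simpa using h0.const_mul (-(2*b)⁻¹)
  have key := integral_Ioi_of_hasDerivAt_of_tendsto' A
    (integrable_mul_exp_neg_mul_sq hb).integrableOn B
  simpa using key

open Filter Set in
lemma aux_integrable_sq_mul_exp {b : ℝ} (hb : 0 < b) :
    Integrable (fun x : ℝ => x ^ 2 * Real.exp (-b * x ^ 2)) := by
  have h := integrable_rpow_mul_exp_neg_mul_sq hb (s := 2) (by norm_num)
  have he : (fun x : ℝ => x ^ (2:ℝ) * Real.exp (-b * x ^ 2))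
      = fun x : ℝ => x ^ 2 * Real.exp (-b * x ^ 2) := by
    funext x
    rw [show (2:ℝ) = ((2:ℕ):ℝ) by norm_num, Real.rpow_natCast]
  rwa [he] at h

open Filter Set in
lemma aux_integral_Ioi_sq_mul_exp {b : ℝ} (hb : 0 < b) :
    ∫ x in Set.Ioi (0:ℝ), x ^ 2 * Real.exp (-b * x ^ 2)
      = (2*b)⁻¹ * (Real.sqrt (π / b) / 2) := by
  have hb' : b ≠ 0 := hb.ne'
  have hint2 : IntegrableOn (fun x : ℝ => x ^ 2 * Real.exp (-b * x ^ 2)) (Set.Ioi 0) :=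
    (aux_integrable_sq_mul_exp hb).integrableOn
  have hexp : IntegrableOn (fun x : ℝ => Real.exp (-b * x ^ 2)) (Set.Ioi 0) :=
    (integrable_exp_neg_mul_sq hb).integrableOn
  have A : ∀ x ∈ Set.Ici (0:ℝ), HasDerivAt (fun x : ℝ => -(2*b)⁻¹ * x * Real.exp (-b * x ^ 2))
      (x ^ 2 * Real.exp (-b * x ^ 2) - (2*b)⁻¹ * Real.exp (-b * x ^ 2)) x := by
    intro x _
    have h1 : HasDerivAt (fun x : ℝ => -(2*b)⁻¹ * x) (-(2*b)⁻¹) x := by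
      simpa using (hasDerivAt_id x).const_mul (-(2*b)⁻¹)
    have h2 : HasDerivAt (fun x : ℝ => Real.exp (-b * x ^ 2))
        (Real.exp (-b * x ^ 2) * (-b * (2 * x ^ 1))) x :=
      ((hasDerivAt_pow 2 x).const_mul (-b)).exp
    have h3 := h1.mul h2
    refine h3.congr_deriv ?_
    field_simp
    ring
  have B : Filter.Tendsto (fun x : ℝ => -(2*b)⁻¹ * x * Real.exp (-b * x ^ 2)) atTop (nhds 0) := by
    have := (aux_tendsto_mul_exp hb).const_mul (-(2*b)⁻¹)
    simpa [mul_assoc] using this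
  have key := integral_Ioi_of_hasDerivAt_of_tendsto' A
    (hint2.sub (hexp.const_mul _)) B
  have h0 : ∫ x in Set.Ioi (0:ℝ),
      (x ^ 2 * Real.exp (-b * x ^ 2) - (2*b)⁻¹ * Real.exp (-b * x ^ 2)) = 0 := by
    simpa using key
  have hsplit : ∫ x in Set.Ioi (0:ℝ), x ^ 2 * Real.exp (-b * x ^ 2)
      = (∫ x in Set.Ioi (0:ℝ),
          (x ^ 2 * Real.exp (-b * x ^ 2) - (2*b)⁻¹ * Real.exp (-b * x ^ 2)))
        + (2*b)⁻¹ * ∫ x in Set.Ioi (0:ℝ), Real.exp (-b * x ^ 2) := by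
    rw [integral_sub hint2 (hexp.const_mul _), integral_const_mul]
    ring
  rw [hsplit, h0, zero_add, integral_gaussian_Ioi]

open Filter Set in
lemma aux_integral_sq_mul_exp {b : ℝ} (hb : 0 < b) :
    ∫ x : ℝ, x ^ 2 * Real.exp (-b * x ^ 2) = (2*b)⁻¹ * Real.sqrt (π / b) := by
  have hi := aux_integrable_sq_mul_exp hb
  have heven : ∫ x in Set.Iic (0:ℝ), x ^ 2 * Real.exp (-b * x ^ 2)
      = ∫ x in Set.Ioi (0:ℝ), x ^ 2 * Real.exp (-b * x ^ 2) := by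
    rw [show Set.Iic (0:ℝ) = Set.Iic (-(0:ℝ)) by norm_num,
      ← integral_comp_neg_Ioi]
    congr 1
    funext x
    ring_nf
  calc ∫ x : ℝ, x ^ 2 * Real.exp (-b * x ^ 2)
      = (∫ x in Set.Iic (0:ℝ), x ^ 2 * Real.exp (-b * x ^ 2))
        + ∫ x in Set.Ioi (0:ℝ), x ^ 2 * Real.exp (-b * x ^ 2) :=
        (intervalIntegral.integral_Iic_add_Ioi hi.integrableOn hi.integrableOn).symm
    _ = (∫ x in Set.Ioi (0:ℝ), x ^ 2 * Real.exp (-b * x ^ 2))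
        + ∫ x in Set.Ioi (0:ℝ), x ^ 2 * Real.exp (-b * x ^ 2) := by
        rw [heven]
    _ = (2*b)⁻¹ * Real.sqrt (π / b) := by
        rw [aux_integral_Ioi_sq_mul_exp hb]; ring

lemma aux_gauss_repr (γ : ℝ) (hγ : 0 < γ) (g : ℝ → ℝ) :
    ∫ x, g x ∂(gaussianReal 0 (Real.toNNReal (γ ^ 2)))
      = ∫ x, (Real.sqrt (2*π) * γ)⁻¹ * Real.exp (-(2*γ^2)⁻¹ * x ^ 2) * g x := by
  have hv : Real.toNNReal (γ ^ 2) ≠ 0 := by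
    simp only [ne_eq, Real.toNNReal_eq_zero, not_le]
    positivity
  rw [gaussianReal_of_var_ne_zero _ hv, gaussianPDF_def]
  have hmeas : Measurable
      (fun x => Real.toNNReal (gaussianPDFReal 0 (Real.toNNReal (γ ^ 2)) x)) :=
    (measurable_gaussianPDFReal _ _).real_toNNReal
  have hrw : (fun x => ENNReal.ofReal (gaussianPDFReal 0 (Real.toNNReal (γ ^ 2)) x))
      = fun x => ((Real.toNNReal (gaussianPDFReal 0 (Real.toNNReal (γ ^ 2)) x) : NNReal) : ENNReal) := rfl
  rw [hrw, integral_withDensity_eq_integral_smul hmeas]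
  refine integral_congr_ae (Filter.Eventually.of_forall fun x => ?_)
  simp only [NNReal.smul_def, smul_eq_mul]
  rw [Real.coe_toNNReal _ (gaussianPDFReal_nonneg _ _ _)]
  have hvv : ((Real.toNNReal (γ ^ 2) : NNReal) : ℝ) = γ ^ 2 :=
    Real.coe_toNNReal _ (sq_nonneg γ)
  simp only [gaussianPDFReal, hvv, sub_zero]
  have hsqrt : Real.sqrt (2 * π * γ ^ 2) = Real.sqrt (2*π) * γ := by
    rw [Real.sqrt_mul (by positivity) (γ ^ 2), Real.sqrt_sq hγ.le]
  rw [hsqrt]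
  congr 2
  ring

lemma aux_gauss_half (γ : ℝ) (hγ : 0 < γ) :
    ∫ x, (if 0 < x then (1:ℝ) else 0) ∂(gaussianReal 0 (Real.toNNReal (γ ^ 2))) = 1/2 := by
  have hb : (0:ℝ) < (2*γ^2)⁻¹ := by positivity
  rw [aux_gauss_repr γ hγ]
  have hrw : (fun x : ℝ => (Real.sqrt (2*π) * γ)⁻¹ * Real.exp (-(2*γ^2)⁻¹ * x ^ 2)
        * (if 0 < x then (1:ℝ) else 0))
      = Set.indicator (Set.Ioi 0)
        (fun x : ℝ => (Real.sqrt (2*π) * γ)⁻¹ * Real.exp (-(2*γ^2)⁻¹ * x ^ 2)) := by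
    funext x
    by_cases h : 0 < x <;> simp [Set.indicator_apply, Set.mem_Ioi, h]
  rw [hrw, integral_indicator measurableSet_Ioi, integral_const_mul, integral_gaussian_Ioi]
  have h2 : Real.sqrt (π / (2*γ^2)⁻¹) = Real.sqrt (2*π) * γ := by
    rw [show π / (2*γ^2)⁻¹ = (2*π) * γ ^ 2 by field_simp,
      Real.sqrt_mul (by positivity), Real.sqrt_sq hγ.le]
  rw [h2]
  have h3 : Real.sqrt (2*π) * γ ≠ 0 := by positivity
  field_simp

lemma aux_gauss_pos_part (γ : ℝ) (hγ : 0 < γ) :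
    ∫ x, max 0 x ∂(gaussianReal 0 (Real.toNNReal (γ ^ 2))) = γ / Real.sqrt (2*π) := by
  have hb : (0:ℝ) < (2*γ^2)⁻¹ := by positivity
  rw [aux_gauss_repr γ hγ]
  have hrw : (fun x : ℝ => (Real.sqrt (2*π) * γ)⁻¹ * Real.exp (-(2*γ^2)⁻¹ * x ^ 2) * max 0 x)
      = Set.indicator (Set.Ioi 0)
        (fun x : ℝ => (Real.sqrt (2*π) * γ)⁻¹ * (x * Real.exp (-(2*γ^2)⁻¹ * x ^ 2))) := by
    funext x
    rcases le_or_gt x 0 with h | h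
    · simp [Set.indicator_apply, Set.mem_Ioi, not_lt.mpr h, max_eq_left h]
    · simp only [Set.indicator_apply, Set.mem_Ioi, h, if_true, max_eq_right h.le]
      ring
  rw [hrw, integral_indicator measurableSet_Ioi, integral_const_mul,
    aux_integral_Ioi_mul_exp hb]
  have h1 : (2 * (2*γ^2)⁻¹)⁻¹ = γ ^ 2 := by
    rw [show 2 * (2*γ^2)⁻¹ = (γ^2)⁻¹ by field_simp]
    simp
  rw [h1]
  have h3 : Real.sqrt (2*π) ≠ 0 := by positivity
  field_simp

lemma aux_gauss_second_moment (γ : ℝ) (hγ : 0 < γ) :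
    ∫ x, x ^ 2 ∂(gaussianReal 0 (Real.toNNReal (γ ^ 2))) = γ ^ 2 := by
  have hb : (0:ℝ) < (2*γ^2)⁻¹ := by positivity
  rw [aux_gauss_repr γ hγ]
  have hrw : (fun x : ℝ => (Real.sqrt (2*π) * γ)⁻¹ * Real.exp (-(2*γ^2)⁻¹ * x ^ 2) * x ^ 2)
      = fun x : ℝ => (Real.sqrt (2*π) * γ)⁻¹ * (x ^ 2 * Real.exp (-(2*γ^2)⁻¹ * x ^ 2)) := by
    funext x; ring
  rw [hrw, integral_const_mul, aux_integral_sq_mul_exp hb]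
  have h1 : (2 * (2*γ^2)⁻¹)⁻¹ = γ ^ 2 := by
    rw [show 2 * (2*γ^2)⁻¹ = (γ^2)⁻¹ by field_simp]
    simp
  have h2 : Real.sqrt (π / (2*γ^2)⁻¹) = Real.sqrt (2*π) * γ := by
    rw [show π / (2*γ^2)⁻¹ = (2*π) * γ ^ 2 by field_simp,
      Real.sqrt_mul (by positivity), Real.sqrt_sq hγ.le]
  rw [h1, h2]
  have h3 : Real.sqrt (2*π) ≠ 0 := by positivity
  field_simp

/-- let `γ > 0`, `Δ ≥ 0`, and let `Z, ε` be independent real random variables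
with finite second moments, `ε ~ N(0, γ²)`, `E[Z² 1_{Z ≤ 0}] ≤ Δ²`,
`−E[Z 1_{Z ≤ 0}] ≤ 1 + Δ²`, and set `Y = max{0, Z} + ε`. Then
`E[ψ₀(Z, Y)] ≤ 3γ²/2 + Δ²/2 + ((2 + 2Δ²)/√(2π)) γ`. -/
theorem psiZero_expectation_bound {Ω : Type*} [MeasurableSpace Ω]
    (μ : Measure Ω) [IsProbabilityMeasure μ]
    (γ Δ : ℝ) (hγ : 0 < γ) (hΔ : 0 ≤ Δ)
    (Z ε : Ω → ℝ) (hZ : Measurable Z) (hε : Measurable ε)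
    (hZε : IndepFun Z ε μ)
    (hZ2 : Integrable (fun ω => (Z ω) ^ 2) μ)
    (hε2 : Integrable (fun ω => (ε ω) ^ 2) μ)
    (hεlaw : Measure.map ε μ = gaussianReal 0 (Real.toNNReal (γ ^ 2)))
    (hZ2trunc : ∫ ω, (Z ω) ^ 2 * (if Z ω ≤ 0 then (1 : ℝ) else 0) ∂μ ≤ Δ ^ 2)
    (hZ1trunc : -∫ ω, Z ω * (if Z ω ≤ 0 then (1 : ℝ) else 0) ∂μ ≤ 1 + Δ ^ 2)
    (Y : Ω → ℝ) (hY : ∀ ω, Y ω = max 0 (Z ω) + ε ω) :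
    ∫ ω, psiZero (Z ω) (Y ω) ∂μ
      ≤ 3 * γ ^ 2 / 2 + Δ ^ 2 / 2 + (2 + 2 * Δ ^ 2) / Real.sqrt (2 * π) * γ := by
  -- notation
  have hm : Measurable (fun ω => min (Z ω) 0) := hZ.min measurable_const
  have hsetε : MeasurableSet {ω | 0 < ε ω} := measurableSet_lt measurable_const hε
  have hind : Measurable (fun ω => if 0 < ε ω then (1:ℝ) else 0) :=
    Measurable.ite hsetε measurable_const measurable_const
  -- pointwise identity
  have key : ∀ ω, psiZero (Z ω) (Y ω)
      = ε ω ^ 2 + ((min (Z ω) 0) ^ 2 * (if 0 < ε ω then (1:ℝ) else 0)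
        + 2 * ((-(min (Z ω) 0)) * max 0 (ε ω))) := by
    intro ω
    rw [hY ω]
    simp only [psiZero]
    rcases le_or_gt 0 (Z ω) with hz | hz
    · rw [max_eq_right hz, min_eq_right hz]
      split_ifs <;> ring
    · rw [max_eq_left hz.le, min_eq_left hz.le]
      simp only [zero_add]
      by_cases h : 0 < ε ω
      · rw [if_pos h, if_pos h, max_eq_right h.le]
        ring
      · rw [if_neg h, if_neg h, max_eq_left (not_lt.mp h)]
        ring
  -- integrability
  have I2 : Integrable (fun ω => (min (Z ω) 0) ^ 2 * (if 0 < ε ω then (1:ℝ) else 0)) μ := by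
    refine hZ2.mono ((hm.pow_const 2).mul hind).aestronglyMeasurable
      (Filter.Eventually.of_forall fun ω => ?_)
    have hmin : (min (Z ω) 0) ^ 2 ≤ (Z ω) ^ 2 := by
      rcases le_or_gt (Z ω) 0 with h | h
      · rw [min_eq_left h]
      · rw [min_eq_right h.le]
        simpa using sq_nonneg (Z ω)
    have hband : |(min (Z ω) 0) ^ 2 * (if 0 < ε ω then (1:ℝ) else 0)| ≤ (Z ω) ^ 2 := by
      rw [abs_mul]
      split_ifs with h
      · simpa [abs_of_nonneg (sq_nonneg (min (Z ω) 0))] using hmin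
      · simpa using sq_nonneg (Z ω)
    simpa [Real.norm_eq_abs, abs_of_nonneg (sq_nonneg (Z ω))] using hband
  have I3 : Integrable (fun ω => (-(min (Z ω) 0)) * max 0 (ε ω)) μ := by
    refine (hZ2.add hε2).mono (hm.neg.mul (measurable_const.max hε)).aestronglyMeasurable
      (Filter.Eventually.of_forall fun ω => ?_)
    have h1 : |min (Z ω) 0| ≤ |Z ω| := by
      rcases le_or_gt (Z ω) 0 with h | h
      · rw [min_eq_left h]
      · rw [min_eq_right h.le, abs_zero]
        exact abs_nonneg _
    have h2 : |max 0 (ε ω)| ≤ |ε ω| := by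
      rcases le_or_gt (ε ω) 0 with h | h
      · rw [max_eq_left h, abs_zero]
        exact abs_nonneg _
      · rw [max_eq_right h.le]
    have hstep : |min (Z ω) 0| * |max 0 (ε ω)| ≤ |Z ω ^ 2 + ε ω ^ 2| := by
      have h4 : |min (Z ω) 0| * |max 0 (ε ω)| ≤ |Z ω| * |ε ω| :=
        mul_le_mul h1 h2 (abs_nonneg _) (abs_nonneg _)
      have h3 : (0:ℝ) ≤ Z ω ^ 2 + ε ω ^ 2 := by positivity
      rw [abs_of_nonneg h3]
      nlinarith [sq_abs (Z ω), sq_abs (ε ω), sq_nonneg (|Z ω| - |ε ω|),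
        abs_nonneg (Z ω), abs_nonneg (ε ω)]
    calc ‖-(min (Z ω) 0) * max 0 (ε ω)‖ = |min (Z ω) 0| * |max 0 (ε ω)| := by
          rw [Real.norm_eq_abs, abs_mul, abs_neg]
      _ ≤ |Z ω ^ 2 + ε ω ^ 2| := hstep
      _ = ‖Z ω ^ 2 + ε ω ^ 2‖ := (Real.norm_eq_abs _).symm
  have I3' : Integrable (fun ω => 2 * ((-(min (Z ω) 0)) * max 0 (ε ω))) μ := I3.const_mul 2
  have I23 : Integrable (fun ω => (min (Z ω) 0) ^ 2 * (if 0 < ε ω then (1:ℝ) else 0)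
      + 2 * ((-(min (Z ω) 0)) * max 0 (ε ω))) μ := I2.add I3'
  -- split the integral
  have hsplit : ∫ ω, psiZero (Z ω) (Y ω) ∂μ
      = (∫ ω, ε ω ^ 2 ∂μ)
        + ((∫ ω, (min (Z ω) 0) ^ 2 * (if 0 < ε ω then (1:ℝ) else 0) ∂μ)
          + 2 * ∫ ω, (-(min (Z ω) 0)) * max 0 (ε ω) ∂μ) := by
    rw [integral_congr_ae (Filter.Eventually.of_forall key),
      integral_add hε2 I23, integral_add I2 I3', integral_const_mul]
  -- value of E[ε²]
  have T1 : ∫ ω, ε ω ^ 2 ∂μ = γ ^ 2 := by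
    have h := integral_map (μ := μ) (f := fun x : ℝ => x ^ 2) hε.aemeasurable
      ((measurable_id.pow_const 2).aestronglyMeasurable)
    rw [hεlaw] at h
    rw [← h, aux_gauss_second_moment γ hγ]
  -- value of E[1_{ε>0}]
  have Tind : ∫ ω, (if 0 < ε ω then (1:ℝ) else 0) ∂μ = 1/2 := by
    have hgm : Measurable (fun x : ℝ => if 0 < x then (1:ℝ) else 0) :=
      Measurable.ite measurableSet_Ioi measurable_const measurable_const
    have h := integral_map (μ := μ) (f := fun x : ℝ => if 0 < x then (1:ℝ) else 0) hε.aemeasurable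
      hgm.aestronglyMeasurable
    rw [hεlaw] at h
    rw [← h, aux_gauss_half γ hγ]
  -- value of E[max 0 ε]
  have Tpos : ∫ ω, max 0 (ε ω) ∂μ = γ / Real.sqrt (2*π) := by
    have hgm : Measurable (fun x : ℝ => max 0 x) := measurable_const.max measurable_id
    have h := integral_map (μ := μ) (f := fun x : ℝ => max 0 x) hε.aemeasurable
      hgm.aestronglyMeasurable
    rw [hεlaw] at h
    rw [← h, aux_gauss_pos_part γ hγ]
  -- independence factorizations
  have hfac2 : ∫ ω, (min (Z ω) 0) ^ 2 * (if 0 < ε ω then (1:ℝ) else 0) ∂μ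
      = (∫ ω, (min (Z ω) 0) ^ 2 ∂μ) * (1/2) := by
    have hip : IndepFun (fun ω => (min (Z ω) 0) ^ 2)
        (fun ω => if 0 < ε ω then (1:ℝ) else 0) μ :=
      hZε.comp (φ := fun z => (min z 0) ^ 2) (ψ := fun e => if 0 < e then (1:ℝ) else 0)
        ((measurable_id.min measurable_const).pow_const 2)
        (Measurable.ite measurableSet_Ioi measurable_const measurable_const)
    have h := hip.integral_fun_mul_eq_mul_integral ((hm.pow_const 2)).aestronglyMeasurable
      hind.aestronglyMeasurable
    exact h.trans (by rw [Tind])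
  have hfac3 : ∫ ω, (-(min (Z ω) 0)) * max 0 (ε ω) ∂μ
      = (∫ ω, -(min (Z ω) 0) ∂μ) * (γ / Real.sqrt (2*π)) := by
    have hip : IndepFun (fun ω => -(min (Z ω) 0)) (fun ω => max 0 (ε ω)) μ :=
      hZε.comp (φ := fun z => -(min z 0)) (ψ := fun e => max 0 e)
        (measurable_id.min measurable_const).neg
        (measurable_const.max measurable_id)
    have h := hip.integral_fun_mul_eq_mul_integral hm.neg.aestronglyMeasurable
      (measurable_const.max hε).aestronglyMeasurable
    exact h.trans (by rw [Tpos])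
  -- connect with hypotheses
  have hm2eq : ∫ ω, (min (Z ω) 0) ^ 2 ∂μ
      = ∫ ω, (Z ω) ^ 2 * (if Z ω ≤ 0 then (1:ℝ) else 0) ∂μ := by
    refine integral_congr_ae (Filter.Eventually.of_forall fun ω => ?_)
    show (min (Z ω) 0) ^ 2 = Z ω ^ 2 * (if Z ω ≤ 0 then (1:ℝ) else 0)
    rcases le_or_gt (Z ω) 0 with h | h
    · rw [min_eq_left h, if_pos h, mul_one]
    · rw [min_eq_right h.le, if_neg (not_le.mpr h), mul_zero]
      simp
  have hm1eq : ∫ ω, -(min (Z ω) 0) ∂μ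
      = -∫ ω, Z ω * (if Z ω ≤ 0 then (1:ℝ) else 0) ∂μ := by
    rw [integral_neg]
    congr 1
    refine integral_congr_ae (Filter.Eventually.of_forall fun ω => ?_)
    show min (Z ω) 0 = Z ω * (if Z ω ≤ 0 then (1:ℝ) else 0)
    rcases le_or_gt (Z ω) 0 with h | h
    · rw [min_eq_left h, if_pos h, mul_one]
    · rw [min_eq_right h.le, if_neg (not_le.mpr h), mul_zero]
  -- final arithmetic
  have hsq : (0:ℝ) < Real.sqrt (2*π) := Real.sqrt_pos.mpr (by positivity)
  have hE : (0:ℝ) ≤ γ / Real.sqrt (2*π) := by positivity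
  have hb2 : (∫ ω, (min (Z ω) 0) ^ 2 ∂μ) * (1/2) ≤ Δ ^ 2 * (1/2) := by
    apply mul_le_mul_of_nonneg_right _ (by norm_num)
    rw [hm2eq]; exact hZ2trunc
  have hb3 : (∫ ω, -(min (Z ω) 0) ∂μ) * (γ / Real.sqrt (2*π))
      ≤ (1 + Δ ^ 2) * (γ / Real.sqrt (2*π)) := by
    apply mul_le_mul_of_nonneg_right _ hE
    rw [hm1eq]; exact hZ1trunc
  have hid : (2 + 2 * Δ ^ 2) / Real.sqrt (2 * π) * γ
      = 2 * ((1 + Δ ^ 2) * (γ / Real.sqrt (2*π))) := by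
    field_simp
  rw [hsplit, T1, hfac2, hfac3, hid]
  have hγ2 : (0:ℝ) ≤ γ ^ 2 := sq_nonneg γ
  linarith
end
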